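/- Let t ≥ 2 with t ≡ 2a (mod 4), a ∈ {0,1}. Let π be a partition and σ a t-core partition such that n_i(σ) = n_i(π) for all 0 ≤ i ≤ t−1 (σ is the t-core of π). Then t divides |π| − |σ| and srank(π) ≡ srank(σ) + 2a·(|π| − |σ|)/t (mod 4). -/

import Mathlib

open scoped Classical

noncomputable section

namespace BGG

/-- The number of odd parts of a partition (given as a multiset of parts). -/
def oddParts (M : Multiset ℕ) : ℕ := (M.filter (fun p => Odd p)).card

/-- The `j`-th part of the conjugate partition: the number of parts that are `≥ j`. -/
def conjCount (M : Multiset ℕ) (j : ℕ) : ℕ := (M.filter (fun p => j ≤ p)).card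

/-- The number of odd parts of the conjugate partition. -/
def oddConjParts (M : Multiset ℕ) : ℕ :=
  ((Finset.Icc 1 M.sum).filter (fun j => Odd (conjCount M j))).card

/-- Stanley's srank: the number of odd parts minus the number of odd parts of the conjugate. -/
def srank (M : Multiset ℕ) : ℤ := (oddParts M : ℤ) - (oddConjParts M : ℤ)

/-- The `x`-th part `λ_x` (for `x ≥ 1`) of the partition with parts `M`. -/
def rowLen (M : Multiset ℕ) (x : ℕ) : ℕ :=
  ((Finset.Icc 1 M.sum).filter (fun j => x ≤ conjCount M j)).card

/-- The cell in row `x`, column `y` (both indexed from 1) lies in the Young diagram. -/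
def CellMem (M : Multiset ℕ) (x y : ℕ) : Prop := 1 ≤ x ∧ 1 ≤ y ∧ x ≤ conjCount M y

/-- A partition is a `t`-core if no cell of its Young diagram has hook length divisible
by `t`. -/
def IsTCore (t : ℕ) (M : Multiset ℕ) : Prop :=
  ∀ x y : ℕ, CellMem M x y → ¬ (t ∣ ((rowLen M x - y) + (conjCount M y - x) + 1))

/-- `rLabel t M i` is the number of cells of the Young diagram labelled `i`, where the cell in
row `x` and column `y` is labelled `(y - x) mod t`. -/
def rLabel (t : ℕ) (M : Multiset ℕ) (i : ℕ) : ℕ :=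
  (((Finset.Icc 1 M.card) ×ˢ (Finset.Icc 1 M.sum)).filter
    (fun c => CellMem M c.1 c.2 ∧ ((c.2 : ℤ) - (c.1 : ℤ)) % (t : ℤ) = (i : ℤ))).card

/-- `nvec t M i = r_i - r_{(i+1) mod t}`. -/
def nvec (t : ℕ) (M : Multiset ℕ) (i : ℕ) : ℤ :=
  (rLabel t M i : ℤ) - (rLabel t M ((i + 1) % t) : ℤ)

/-- The set of beta-numbers `β_j = λ_j + ν - j`, `1 ≤ j ≤ ν`, where `ν = t * (number of parts)`
is a multiple of `t` that is at least the number of parts. -/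
def betaSet (t : ℕ) (M : Multiset ℕ) : Finset ℕ :=
  (Finset.Icc 1 (t * M.card)).image (fun j => rowLen M j + t * M.card - j)

/-- The `i`-th component `π̂_i` of the `t`-quotient of a partition: if the beta-numbers
congruent to `i` mod `t` are `t c₁ + i > t c₂ + i > ⋯ > t c_s + i` then `π̂_i` has parts
`c_k - (s - k)` (zeros discarded). -/
def tQuotient (t : ℕ) (M : Multiset ℕ) (i : ℕ) : Multiset ℕ :=
  Multiset.filter (fun p => 0 < p)
    (((betaSet t M).filter (fun e => e % t = i)).val.map
      (fun e => (e - i) / t - ((betaSet t M).filter (fun e' => e' % t = i ∧ e' < e)).card))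

/-- The 2-quotient-rank: the number of parts of `π̂₀` minus the number of parts of `π̂₁`. -/
def tqrank (M : Multiset ℕ) : ℤ :=
  ((tQuotient 2 M 0).card : ℤ) - ((tQuotient 2 M 1).card : ℤ)

/-- The Andrews-Garvan crank. -/
def crank (M : Multiset ℕ) : ℤ :=
  if M.count 1 = 0 then (M.sup : ℤ)
  else ((M.filter (fun p => M.count 1 < p)).card : ℤ) - (M.count 1 : ℤ)

/-- `pi1 M` is the partition with `⌊f_{2i}/2⌋` parts equal to `i` for each `i ≥ 1`, where
`f_j` is the number of parts of `M` equal to `j`. -/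
def pi1 (M : Multiset ℕ) : Multiset ℕ :=
  (Finset.Icc 1 M.sum).val.bind (fun i => Multiset.replicate (M.count (2 * i) / 2) i)

/-- Partitions of type B. -/
def TypeB (M : Multiset ℕ) : Prop :=
  M = ({3, 1} : Multiset ℕ) ∨
    (M.sum ≠ 4 ∧ rowLen M 2 + 2 ≤ rowLen M 1 ∧ conjCount M 2 + 2 ≤ conjCount M 1 ∧
      ¬ ((rowLen M 1 : ℤ) - 2 = (rowLen M 2 : ℤ) ∧ Even (rowLen M 2)) ∧
      ∀ p : ℕ, Even p → M.count p ≤ 1)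

/-- The St-crank: `crank(π₁) + srank(π)/2 + Ψ(π)`, where `Ψ(π) = 1` iff `π` is of type B. -/
noncomputable def stcrank (M : Multiset ℕ) : ℤ :=
  crank (pi1 M) + srank M / 2 + (if TypeB M then 1 else 0)

/-- The BG-rank: the alternating sum of parities of the parts, listed in nonincreasing order. -/
def bgRank (M : Multiset ℕ) : ℤ :=
  ∑ j ∈ Finset.range M.card,
    (-1 : ℤ) ^ j * (if Odd (((M.sort (· ≤ ·)).reverse).getD j 0) then 1 else 0)

/-- The residue mod 5 of the 5-core-crank of a partition of a number `≡ 4 (mod 5)`. -/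
def c5 (M : Multiset ℕ) : ℤ :=
  2 + 2 * (rLabel 5 M 0 : ℤ) + (rLabel 5 M 1 : ℤ) - (rLabel 5 M 3 : ℤ) - 2 * (rLabel 5 M 4 : ℤ)


/-! ### Auxiliary lemmas -/

lemma card_filter_Icc_mod (c r : ℕ) (hr : r < 2) :
    ((Finset.Icc 1 c).filter (fun x => x % 2 = r)).card = (c + r) / 2 := by
  induction c with
  | zero =>
      simp only [show Finset.Icc 1 0 = ∅ from rfl, Finset.filter_empty, Finset.card_empty]
      omega
  | succ n ih =>
      rw [← Finset.insert_Icc_right_eq_Icc_add_one (by omega), Finset.filter_insert]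
      by_cases h : (n + 1) % 2 = r
      · rw [if_pos h, Finset.card_insert_of_notMem (by simp), ih]
        omega
      · rw [if_neg h, ih]
        omega

lemma card_filter_range_odd (n : ℕ) :
    ((Finset.range n).filter (fun x => x % 2 = 1)).card = n / 2 := by
  induction n with
  | zero => simp
  | succ m ih =>
      rw [Finset.range_add_one, Finset.filter_insert]
      by_cases h : m % 2 = 1
      · rw [if_pos h, Finset.card_insert_of_notMem (by simp), ih]; omega
      · rw [if_neg h, ih]; omega

lemma oddParts_cons (p : ℕ) (M : Multiset ℕ) :
    oddParts (p ::ₘ M) = oddParts M + (if Odd p then 1 else 0) := by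
  unfold oddParts
  rw [Multiset.filter_cons]
  by_cases h : Odd p
  · simp [h]
  · simp [h]

lemma conjCount_cons (p : ℕ) (M : Multiset ℕ) (j : ℕ) :
    conjCount (p ::ₘ M) j = conjCount M j + (if j ≤ p then 1 else 0) := by
  unfold conjCount
  rw [Multiset.filter_cons]
  by_cases h : j ≤ p
  · simp [h]
  · simp [h]

lemma conjCount_le_card (M : Multiset ℕ) (j : ℕ) : conjCount M j ≤ M.card :=
  Multiset.card_le_card (Multiset.filter_le _ _)

lemma le_sum_of_conjCount_pos (M : Multiset ℕ) (y : ℕ) (h : 1 ≤ conjCount M y) :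
    y ≤ M.sum := by
  have h' : 0 < (M.filter (fun p => y ≤ p)).card := h
  obtain ⟨q, hq⟩ := Multiset.card_pos_iff_exists_mem.mp h'
  rw [Multiset.mem_filter] at hq
  exact le_trans hq.2 (Multiset.single_le_sum (fun _ _ => Nat.zero_le _) _ hq.1)

lemma sum_conjCount (M : Multiset ℕ) (s : ℕ) (hs : ∀ p ∈ M, p ≤ s) :
    ∑ j ∈ Finset.Icc 1 s, conjCount M j = M.sum := by
  induction M using Multiset.induction with
  | empty => simp [conjCount]
  | cons p M ih =>
      have hp : p ≤ s := hs p (Multiset.mem_cons_self _ _)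
      have hM : ∀ q ∈ M, q ≤ s := fun q hq => hs q (Multiset.mem_cons_of_mem hq)
      simp only [conjCount_cons, Finset.sum_add_distrib, ih hM, Multiset.sum_cons]
      have h1 : (∑ j ∈ Finset.Icc 1 s, if j ≤ p then 1 else 0) =
          ((Finset.Icc 1 s).filter (fun j => j ≤ p)).card := by
        rw [Finset.card_filter]
      have h2 : (Finset.Icc 1 s).filter (fun j => j ≤ p) = Finset.Icc 1 p := by
        ext j; simp only [Finset.mem_filter, Finset.mem_Icc]; omega
      rw [h1, h2, Nat.card_Icc]
      omega

/-- `|π| = 𝒪(π) + 2·(number of cells in even columns)`. -/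
lemma sum_eq_oddParts_add (M : Multiset ℕ) (s : ℕ) (hs : ∀ p ∈ M, p ≤ s) :
    M.sum = oddParts M +
      2 * ∑ j ∈ (Finset.Icc 1 s).filter (fun j => j % 2 = 0), conjCount M j := by
  induction M using Multiset.induction with
  | empty => simp [oddParts, conjCount]
  | cons p M ih =>
      have hp : p ≤ s := hs p (Multiset.mem_cons_self _ _)
      have hM : ∀ q ∈ M, q ≤ s := fun q hq => hs q (Multiset.mem_cons_of_mem hq)
      simp only [Multiset.sum_cons, oddParts_cons, conjCount_cons, Finset.sum_add_distrib,
        ih hM]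
      have h1 : (∑ j ∈ (Finset.Icc 1 s).filter (fun j => j % 2 = 0), if j ≤ p then 1 else 0) =
          (((Finset.Icc 1 s).filter (fun j => j % 2 = 0)).filter (fun j => j ≤ p)).card := by
        rw [Finset.card_filter]
      have h2 : ((Finset.Icc 1 s).filter (fun j => j % 2 = 0)).filter (fun j => j ≤ p)
          = (Finset.Icc 1 p).filter (fun j => j % 2 = 0) := by
        rw [Finset.filter_filter]
        ext j
        simp only [Finset.mem_filter, Finset.mem_Icc]
        omega
      have h3 := card_filter_Icc_mod p 0 (by omega)
      rw [h1, h2, h3]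
      rcases Nat.even_or_odd p with he | ho
      · rw [if_neg (by simpa [Nat.odd_iff, Nat.even_iff] using he)]
        have : p % 2 = 0 := Nat.even_iff.mp he
        omega
      · rw [if_pos ho]
        have : p % 2 = 1 := Nat.odd_iff.mp ho
        omega

/-- The cells of column `y` satisfying a property on the row index. -/
lemma card_cell_col (M : Multiset ℕ) (y : ℕ) (hy : 1 ≤ y) (p : ℕ → Prop) :
    (((Finset.Icc 1 M.card) ×ˢ (Finset.Icc 1 M.sum)).filter
      (fun c => (CellMem M c.1 c.2 ∧ p c.1) ∧ c.2 = y)).card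
    = ((Finset.Icc 1 (conjCount M y)).filter p).card := by
  refine Finset.card_bij' (fun c _ => c.1) (fun x _ => (x, y)) ?hi ?hj ?hl ?hr
  case hi =>
    intro c hc
    simp only [Finset.mem_filter, Finset.mem_product, Finset.mem_Icc] at hc ⊢
    obtain ⟨⟨hx, hy'⟩, ⟨⟨h1, h2, h3⟩, hp⟩, hcy⟩ := hc
    subst hcy
    exact ⟨⟨h1, h3⟩, hp⟩
  case hj =>
    intro x hx
    simp only [Finset.mem_filter, Finset.mem_Icc] at hx
    obtain ⟨⟨h1, h2⟩, hp⟩ := hx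
    have hyle : y ≤ M.sum := le_sum_of_conjCount_pos M y (le_trans h1 h2)
    simp only [Finset.mem_filter, Finset.mem_product, Finset.mem_Icc]
    exact ⟨⟨⟨h1, le_trans h2 (conjCount_le_card M y)⟩, ⟨hy, hyle⟩⟩,
      ⟨⟨h1, hy, h2⟩, hp⟩, trivial⟩
  case hl =>
    intro c hc
    simp only [Finset.mem_filter] at hc
    exact Prod.ext rfl hc.2.2.symm
  case hr =>
    intro x hx
    rfl

/-- `rLabel` as a column-by-column sum. -/
lemma rLabel_eq_sum_col (t : ℕ) (M : Multiset ℕ) (i : ℕ) :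
    rLabel t M i = ∑ y ∈ Finset.Icc 1 M.sum,
      ((Finset.Icc 1 (conjCount M y)).filter
        (fun x : ℕ => ((y : ℤ) - (x : ℤ)) % (t : ℤ) = (i : ℤ))).card := by
  unfold rLabel
  rw [Finset.card_eq_sum_card_fiberwise (f := Prod.snd) (t := Finset.Icc 1 M.sum)
    (by intro c hc
        simp only [Finset.mem_coe, Finset.mem_filter, Finset.mem_product] at hc
        exact hc.1.2)]
  apply Finset.sum_congr rfl
  intro y hy
  have hy1 : 1 ≤ y := (Finset.mem_Icc.mp hy).1
  rw [Finset.filter_filter]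
  convert card_cell_col M y hy1
    (fun x : ℕ => ((y : ℤ) - (x : ℤ)) % (t : ℤ) = (i : ℤ)) using 2
  · ext c
    simp only [Finset.mem_filter]
    constructor
    · rintro ⟨hbox, ⟨h1, h2⟩, h3⟩
      subst h3
      exact ⟨hbox, ⟨h1, h2⟩, rfl⟩
    · rintro ⟨hbox, ⟨h1, h2⟩, h3⟩
      subst h3
      exact ⟨hbox, ⟨h1, h2⟩, rfl⟩
  · ext x
    simp only [Finset.mem_filter]

/-- partition of a column into labels mod t -/
lemma col_label_partition (t : ℕ) (ht : 1 ≤ t) (y c : ℕ) :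
    ∑ i ∈ Finset.range t,
      ((Finset.Icc 1 c).filter (fun x : ℕ => ((y : ℤ) - (x : ℤ)) % (t : ℤ) = (i : ℤ))).card
    = c := by
  have ht' : (0 : ℤ) < (t : ℤ) := by exact_mod_cast ht
  have H : ∀ x ∈ Finset.Icc 1 c, (((y : ℤ) - (x : ℤ)) % (t : ℤ)).toNat ∈ Finset.range t := by
    intro x _
    have h1 : 0 ≤ ((y : ℤ) - (x : ℤ)) % (t : ℤ) := Int.emod_nonneg _ (by omega)
    have h2 : ((y : ℤ) - (x : ℤ)) % (t : ℤ) < (t : ℤ) := Int.emod_lt_of_pos _ ht'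
    simp only [Finset.mem_range]
    omega
  have key := Finset.card_eq_sum_card_fiberwise H
  rw [Nat.card_Icc] at key
  have heach : ∀ i ∈ Finset.range t,
      ((Finset.Icc 1 c).filter (fun x : ℕ => (((y : ℤ) - (x : ℤ)) % (t : ℤ)).toNat = i)).card
      = ((Finset.Icc 1 c).filter
          (fun x : ℕ => ((y : ℤ) - (x : ℤ)) % (t : ℤ) = (i : ℤ))).card := by
    intro i hi
    congr 1
    apply Finset.filter_congr
    intro x _
    have h1 : 0 ≤ ((y : ℤ) - (x : ℤ)) % (t : ℤ) := Int.emod_nonneg _ (by omega)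
    constructor
    · intro h; omega
    · intro h; omega
  rw [Finset.sum_congr rfl heach] at key
  omega

/-- mod-2 label 1 cells of a column split by mod-t labels, when 2 ∣ t -/
lemma col_two_split (t : ℕ) (ht : 1 ≤ t) (ht2 : 2 ∣ t) (y c : ℕ) :
    ((Finset.Icc 1 c).filter
      (fun x : ℕ => ((y : ℤ) - (x : ℤ)) % ((2 : ℕ) : ℤ) = ((1 : ℕ) : ℤ))).card
    = ∑ i ∈ (Finset.range t).filter (fun i => i % 2 = 1),
        ((Finset.Icc 1 c).filter
          (fun x : ℕ => ((y : ℤ) - (x : ℤ)) % (t : ℤ) = (i : ℤ))).card := by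
  have ht' : (0 : ℤ) < (t : ℤ) := by exact_mod_cast ht
  have hdvd : (2 : ℤ) ∣ (t : ℤ) := by exact_mod_cast ht2
  have key : ∀ x : ℕ, (((y : ℤ) - (x : ℤ)) % (t : ℤ)) % 2 = ((y : ℤ) - (x : ℤ)) % 2 :=
    fun x => Int.emod_emod_of_dvd _ hdvd
  have H : ∀ x ∈ (Finset.Icc 1 c).filter
      (fun x : ℕ => ((y : ℤ) - (x : ℤ)) % ((2 : ℕ) : ℤ) = ((1 : ℕ) : ℤ)),
      (((y : ℤ) - (x : ℤ)) % (t : ℤ)).toNat ∈ (Finset.range t).filter (fun i => i % 2 = 1) := by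
    intro x hx
    simp only [Finset.mem_filter, Finset.mem_Icc] at hx
    simp only [Finset.mem_filter, Finset.mem_range]
    have h1 : 0 ≤ ((y : ℤ) - (x : ℤ)) % (t : ℤ) := Int.emod_nonneg _ (by omega)
    have h2 : ((y : ℤ) - (x : ℤ)) % (t : ℤ) < (t : ℤ) := Int.emod_lt_of_pos _ ht'
    have h3 := key x
    have h4 := hx.2
    omega
  rw [Finset.card_eq_sum_card_fiberwise H]
  apply Finset.sum_congr rfl
  intro i hi
  simp only [Finset.mem_filter, Finset.mem_range] at hi
  rw [Finset.filter_filter]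
  congr 1
  ext x
  simp only [Finset.mem_filter, Finset.mem_Icc]
  have h1 : 0 ≤ ((y : ℤ) - (x : ℤ)) % (t : ℤ) := Int.emod_nonneg _ (by omega)
  have h3 := key x
  constructor
  · rintro ⟨hx, h2lab, htoNat⟩
    refine ⟨hx, ?_⟩
    omega
  · rintro ⟨hx, hlab⟩
    refine ⟨hx, ?_, ?_⟩ <;> omega

/-- number of mod-2-label-1 cells in a column -/
lemma col_two_count (y c : ℕ) :
    ((Finset.Icc 1 c).filter
      (fun x : ℕ => ((y : ℤ) - (x : ℤ)) % ((2 : ℕ) : ℤ) = ((1 : ℕ) : ℤ))).card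
    = (c + (y + 1) % 2) / 2 := by
  have hset : ((Finset.Icc 1 c).filter
        (fun x : ℕ => ((y : ℤ) - (x : ℤ)) % ((2 : ℕ) : ℤ) = ((1 : ℕ) : ℤ)))
      = ((Finset.Icc 1 c).filter (fun x : ℕ => x % 2 = (y + 1) % 2)) := by
    ext x
    simp only [Finset.mem_filter, Finset.mem_Icc]
    constructor
    · rintro ⟨hx, h⟩; exact ⟨hx, by omega⟩
    · rintro ⟨hx, h⟩; exact ⟨hx, by omega⟩
  rw [hset, card_filter_Icc_mod c ((y + 1) % 2) (by omega)]

/-- The labels of the cells of a partition refine its size. -/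
lemma sum_rLabel (t : ℕ) (ht : 1 ≤ t) (M : Multiset ℕ) :
    ∑ i ∈ Finset.range t, rLabel t M i = M.sum := by
  rw [Finset.sum_congr rfl (fun i _ => rLabel_eq_sum_col t M i), Finset.sum_comm]
  rw [Finset.sum_congr rfl (fun y _ => col_label_partition t ht y (conjCount M y))]
  exact sum_conjCount M M.sum
    (fun p hp => Multiset.single_le_sum (fun _ _ => Nat.zero_le _) _ hp)

/-- `r₁` for mod 2 labels equals the sum of `r_i` over odd `i` for mod `t` labels, `2 ∣ t`. -/
lemma rLabel_two_eq (t : ℕ) (ht : 1 ≤ t) (ht2 : 2 ∣ t) (M : Multiset ℕ) :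
    rLabel 2 M 1 = ∑ i ∈ (Finset.range t).filter (fun i => i % 2 = 1), rLabel t M i := by
  calc rLabel 2 M 1
      = ∑ y ∈ Finset.Icc 1 M.sum,
          ((Finset.Icc 1 (conjCount M y)).filter
            (fun x : ℕ => ((y : ℤ) - (x : ℤ)) % ((2 : ℕ) : ℤ) = ((1 : ℕ) : ℤ))).card :=
        rLabel_eq_sum_col 2 M 1
    _ = ∑ y ∈ Finset.Icc 1 M.sum, ∑ i ∈ (Finset.range t).filter (fun i => i % 2 = 1),
          ((Finset.Icc 1 (conjCount M y)).filter
            (fun x : ℕ => ((y : ℤ) - (x : ℤ)) % (t : ℤ) = (i : ℤ))).card :=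
        Finset.sum_congr rfl (fun y _ => col_two_split t ht ht2 y (conjCount M y))
    _ = ∑ i ∈ (Finset.range t).filter (fun i => i % 2 = 1), ∑ y ∈ Finset.Icc 1 M.sum,
          ((Finset.Icc 1 (conjCount M y)).filter
            (fun x : ℕ => ((y : ℤ) - (x : ℤ)) % (t : ℤ) = (i : ℤ))).card := Finset.sum_comm
    _ = ∑ i ∈ (Finset.range t).filter (fun i => i % 2 = 1), rLabel t M i :=
        Finset.sum_congr rfl (fun i _ => (rLabel_eq_sum_col t M i).symm)

/-- The key congruence: `srank(π) ≡ 2 r₁(π) (mod 4)` with mod 2 labels. -/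
lemma srank_modeq (M : Multiset ℕ) : srank M ≡ 2 * (rLabel 2 M 1 : ℤ) [ZMOD 4] := by
  have hr1 : rLabel 2 M 1 = ∑ y ∈ Finset.Icc 1 M.sum, (conjCount M y + (y + 1) % 2) / 2 := by
    rw [rLabel_eq_sum_col 2 M 1]
    exact Finset.sum_congr rfl fun y _ => col_two_count y _
  have hcol : ∀ y, 2 * ((conjCount M y + (y + 1) % 2) / 2)
      + (if y % 2 = 1 then conjCount M y % 2 else 0)
      = conjCount M y + (if y % 2 = 0 then conjCount M y % 2 else 0) := by
    intro y
    rcases Nat.even_or_odd y with h | h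
    · have h0 : y % 2 = 0 := Nat.even_iff.mp h
      simp only [h0]
      norm_num
      omega
    · have h0 : y % 2 = 1 := Nat.odd_iff.mp h
      simp only [h0]
      norm_num
      omega
  -- main ℕ identity, summed over columns
  have hsum : 2 * rLabel 2 M 1
        + ∑ y ∈ Finset.Icc 1 M.sum, (if y % 2 = 1 then conjCount M y % 2 else 0)
      = M.sum + ∑ y ∈ Finset.Icc 1 M.sum, (if y % 2 = 0 then conjCount M y % 2 else 0) := by
    have e1 := Finset.sum_congr rfl fun y (_ : y ∈ Finset.Icc 1 M.sum) => hcol y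
    rw [Finset.sum_add_distrib, Finset.sum_add_distrib,
      sum_conjCount M M.sum
        (fun p hp => Multiset.single_le_sum (fun _ _ => Nat.zero_le _) _ hp)] at e1
    rw [hr1, Finset.mul_sum]
    exact e1
  have hocp : oddConjParts M = ∑ y ∈ Finset.Icc 1 M.sum, conjCount M y % 2 := by
    unfold oddConjParts
    rw [Finset.card_filter]
    apply Finset.sum_congr rfl
    intro y _
    by_cases h : Odd (conjCount M y)
    · rw [if_pos h, Nat.odd_iff.mp h]
    · rw [if_neg h]
      have := Nat.even_iff.mp (Nat.not_odd_iff_even.mp h)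
      omega
  have hsplit : ∀ y, conjCount M y % 2
      = (if y % 2 = 0 then conjCount M y % 2 else 0)
        + (if y % 2 = 1 then conjCount M y % 2 else 0) := by
    intro y
    rcases Nat.even_or_odd y with h | h
    · have h0 : y % 2 = 0 := Nat.even_iff.mp h
      simp [h0]
    · have h0 : y % 2 = 1 := Nat.odd_iff.mp h
      simp [h0]
  have hocp2 : oddConjParts M
      = (∑ y ∈ Finset.Icc 1 M.sum, (if y % 2 = 0 then conjCount M y % 2 else 0))
        + ∑ y ∈ Finset.Icc 1 M.sum, (if y % 2 = 1 then conjCount M y % 2 else 0) := by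
    rw [hocp, ← Finset.sum_add_distrib]
    exact Finset.sum_congr rfl fun y _ => hsplit y
  have hO := sum_eq_oddParts_add M M.sum
    (fun p hp => Multiset.single_le_sum (fun _ _ => Nat.zero_le _) _ hp)
  -- evenness of E + A0
  have hA0 : (∑ y ∈ Finset.Icc 1 M.sum, (if y % 2 = 0 then conjCount M y % 2 else 0))
      = ∑ y ∈ (Finset.Icc 1 M.sum).filter (fun y => y % 2 = 0), conjCount M y % 2 :=
    (Finset.sum_filter _ _).symm
  have heven : 2 ∣ (∑ j ∈ (Finset.Icc 1 M.sum).filter (fun j => j % 2 = 0), conjCount M j)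
      + ∑ y ∈ (Finset.Icc 1 M.sum).filter (fun y => y % 2 = 0), conjCount M y % 2 := by
    rw [← Finset.sum_add_distrib]
    exact Finset.dvd_sum fun y _ => by omega
  -- put everything together
  rw [Int.ModEq]
  set E := ∑ j ∈ (Finset.Icc 1 M.sum).filter (fun j => j % 2 = 0), conjCount M j with hE
  set A0 := ∑ y ∈ Finset.Icc 1 M.sum, (if y % 2 = 0 then conjCount M y % 2 else 0) with hA0'
  set A1 := ∑ y ∈ Finset.Icc 1 M.sum, (if y % 2 = 1 then conjCount M y % 2 else 0) with hA1'
  have hsrank : srank M = (oddParts M : ℤ) - (oddConjParts M : ℤ) := rfl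
  rw [← hA0] at heven
  rw [hsrank]
  omega

/-- The `y ≤ M.sum` bound needed everywhere. -/
lemma parts_le_sum (M : Multiset ℕ) : ∀ p ∈ M, p ≤ M.sum :=
  fun p hp => Multiset.single_le_sum (fun _ _ => Nat.zero_le _) _ hp


/-- If `t ≥ 2`, `t ≡ 2a (mod 4)` with `a ∈ {0,1}`, `π` is a partition and `σ` is its
`t`-core (i.e. the `t`-core with the same `n`-vector), then `t` divides `|π| - |σ|` and
`srank(π) ≡ srank(σ) + 2a(|π| - |σ|)/t (mod 4)`. -/
theorem srank_tcore_quotient_even (t a : ℕ) (ht : 2 ≤ t) (ha : a = 0 ∨ a = 1)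
    (hta : t ≡ 2 * a [MOD 4]) (n m : ℕ) (π : Nat.Partition n) (σ : Nat.Partition m)
    (hσ : IsTCore t σ.parts) (hvec : ∀ i < t, nvec t σ.parts i = nvec t π.parts i) :
    (t : ℤ) ∣ ((n : ℤ) - (m : ℤ)) ∧
      srank π.parts ≡
        srank σ.parts + 2 * (a : ℤ) * (((n : ℤ) - (m : ℤ)) / (t : ℤ)) [ZMOD 4] := by
  have ht1 : 1 ≤ t := by omega
  have ht0 : (t : ℤ) ≠ 0 := by exact_mod_cast (by omega : t ≠ 0)
  have hta' : t % 4 = 2 * a := by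
    have h4 : t % 4 = (2 * a) % 4 := hta
    rcases ha with h | h <;> omega
  have ht2 : 2 ∣ t := by rcases ha with h | h <;> omega
  -- the difference of cell counts in each residue class is constant
  have hconst : ∀ i, i < t →
      (rLabel t π.parts i : ℤ) - (rLabel t σ.parts i : ℤ)
      = (rLabel t π.parts 0 : ℤ) - (rLabel t σ.parts 0 : ℤ) := by
    intro i
    induction i with
    | zero => intro _; rfl
    | succ k ih =>
        intro hk
        have h := hvec k (by omega)
        simp only [nvec] at h
        rw [Nat.mod_eq_of_lt (by omega : k + 1 < t)] at h
        have hk' := ih (by omega)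
        omega
  set d0 : ℤ := (rLabel t π.parts 0 : ℤ) - (rLabel t σ.parts 0 : ℤ) with hd0
  -- the size identities
  have hπ : ∑ i ∈ Finset.range t, rLabel t π.parts i = n := by
    rw [sum_rLabel t ht1]; exact π.parts_sum
  have hσ' : ∑ i ∈ Finset.range t, rLabel t σ.parts i = m := by
    rw [sum_rLabel t ht1]; exact σ.parts_sum
  have hdiff : (n : ℤ) - (m : ℤ) = (t : ℤ) * d0 := by
    have h1 : ∑ i ∈ Finset.range t,
        ((rLabel t π.parts i : ℤ) - (rLabel t σ.parts i : ℤ)) = (t : ℤ) * d0 := by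
      rw [Finset.sum_congr rfl (fun i hi => hconst i (Finset.mem_range.mp hi))]
      rw [Finset.sum_const, Finset.card_range, nsmul_eq_mul]
    rw [Finset.sum_sub_distrib] at h1
    rw [← h1, ← Nat.cast_sum, ← Nat.cast_sum, hπ, hσ']
  have hdivt : ((n : ℤ) - (m : ℤ)) / (t : ℤ) = d0 := by
    rw [hdiff, Int.mul_ediv_cancel_left _ ht0]
  refine ⟨⟨d0, hdiff⟩, ?_⟩
  -- the r₁ (mod 2) relation
  have hq : (rLabel 2 π.parts 1 : ℤ) - (rLabel 2 σ.parts 1 : ℤ) = ((t / 2 : ℕ) : ℤ) * d0 := by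
    rw [rLabel_two_eq t ht1 ht2 π.parts, rLabel_two_eq t ht1 ht2 σ.parts]
    rw [Nat.cast_sum, Nat.cast_sum, ← Finset.sum_sub_distrib]
    have heach : ∀ i ∈ (Finset.range t).filter (fun i => i % 2 = 1),
        (rLabel t π.parts i : ℤ) - (rLabel t σ.parts i : ℤ) = d0 := fun i hi =>
      hconst i (Finset.mem_range.mp (Finset.mem_filter.mp hi).1)
    rw [Finset.sum_congr rfl heach, Finset.sum_const, card_filter_range_odd, nsmul_eq_mul]
  have hhalf : t / 2 % 2 = a := by omega
  obtain ⟨q, hqq⟩ : ∃ q, t / 2 = 2 * q + a := ⟨t / 2 / 2, by omega⟩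
  have hπs := Int.ModEq.dvd (srank_modeq π.parts)
  have hσs := Int.ModEq.dvd (srank_modeq σ.parts)
  rw [hdivt]
  rw [Int.modEq_iff_dvd]
  set P : ℤ := (q : ℤ) * d0 with hP
  have e2 : (rLabel 2 π.parts 1 : ℤ)
      = (rLabel 2 σ.parts 1 : ℤ) + 2 * P + (a : ℤ) * d0 := by
    have h5 : ((t / 2 : ℕ) : ℤ) = 2 * (q : ℤ) + (a : ℤ) := by
      rw [hqq]; push_cast; ring
    rw [hP]
    have := hq
    rw [h5] at this
    linarith [this]
  rcases ha with rfl | rfl <;>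
    (push_cast at e2 ⊢; omega)

end BGG

end
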